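/- arXiv:2303.15873 — 2 statements merged into one kernel-verified Lean document; each statement's English description precedes it below -/
import Mathlib

section
/- Let k be a natural number, let G be a finite simple graph, let M be the set of vertices of G of degree less than k, and let m = |M|. Let X' be a set of exactly k vertices of G such that every vertex of X' is not in M, has no neighbor in M, and has degree at least 2k - m - 1 in G. Then every vertex of G ⊕ (M ∪ X') has degree at least k. -/
/-- Subgraph complementation: `scompl G S` complements the subgraph of `G` induced by `S`. -/
def scompl {V : Type*} (G : SimpleGraph V) (S : Set V) : SimpleGraph V where
  Adj x y := x ≠ y ∧ ((x ∈ S ∧ y ∈ S ∧ ¬ G.Adj x y) ∨ (¬(x ∈ S ∧ y ∈ S) ∧ G.Adj x y))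
  symm := by
    constructor
    rintro x y ⟨hxy, h⟩
    refine ⟨hxy.symm, ?_⟩
    rcases h with ⟨hx, hy, h⟩ | ⟨h, hadj⟩
    · exact Or.inl ⟨hy, hx, fun h' => h (G.adj_symm h')⟩
    · exact Or.inr ⟨fun hc => h ⟨hc.2, hc.1⟩, G.adj_symm hadj⟩
  loopless := ⟨fun x h => h.1 rfl⟩

/-- Degree of a vertex in a finite simple graph. -/
noncomputable def deg {V : Type*} [Fintype V] (G : SimpleGraph V) (v : V) : ℕ :=
  (G.neighborSet v).ncard

/-- `a, b, c, d` form an induced diamond with `a`, `b` its degree-2 vertices. -/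
def IsDiamond {V : Type*} (G : SimpleGraph V) (a b c d : V) : Prop :=
  a ≠ b ∧ a ≠ c ∧ a ≠ d ∧ b ≠ c ∧ b ≠ d ∧ c ≠ d ∧
  G.Adj a c ∧ G.Adj a d ∧ G.Adj b c ∧ G.Adj b d ∧ G.Adj c d ∧ ¬ G.Adj a b

def DiamondFree {V : Type*} (G : SimpleGraph V) : Prop :=
  ∀ a b c d : V, ¬ IsDiamond G a b c d

/-- `r` together with the `t` distinct leaves `f 0, …, f (t-1)` forms an induced `K_{1,t}`
with center `r`. -/
def IsStar {V : Type*} (G : SimpleGraph V) (t : ℕ) (r : V) (f : Fin t → V) : Prop :=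
  Function.Injective f ∧ (∀ i, G.Adj r (f i)) ∧ ∀ i j, i ≠ j → ¬ G.Adj (f i) (f j)

def StarFree {V : Type*} (G : SimpleGraph V) (t : ℕ) : Prop :=
  ∀ (r : V) (f : Fin t → V), ¬ IsStar G t r f

theorem stmt2 {V : Type*} [Fintype V] (k : ℕ) (G : SimpleGraph V)
    (M : Set V) (hM : M = {v : V | deg G v < k}) (m : ℕ) (hm : m = M.ncard)
    (X' : Set V) (hcard : X'.ncard = k)
    (hX' : ∀ x ∈ X', x ∉ M ∧ (∀ w ∈ M, ¬ G.Adj x w) ∧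
      (2 * (k : ℤ) - m - 1 ≤ (deg G x : ℤ))) :
    ∀ v : V, k ≤ deg (scompl G (M ∪ X')) v := by
  intro v
  by_cases hvS : v ∈ M ∪ X'
  · rcases hvS with hvM | hvX
    · -- v ∈ M : all of X' are scompl-neighbors
      have hsub : X' ⊆ (scompl G (M ∪ X')).neighborSet v := by
        intro x hx
        obtain ⟨hxM, hxMadj, _⟩ := hX' x hx
        exact ⟨fun h => hxM (h ▸ hvM),
          Or.inl ⟨Or.inl hvM, Or.inr hx, fun h => hxMadj v hvM h.symm⟩⟩
      calc k = X'.ncard := hcard.symm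
        _ ≤ _ := Set.ncard_le_ncard hsub (Set.toFinite _)
    · -- v ∈ X'
      obtain ⟨hvM, hvMadj, hdeg⟩ := hX' v hvX
      set N := G.neighborSet v with hN
      have hNM : ∀ w ∈ M, w ∉ N := fun w hw h => hvMadj w hw h
      have hsub : M ∪ (N \ X') ⊆ (scompl G (M ∪ X')).neighborSet v := by
        intro w hw
        rcases hw with hwM | ⟨hwN, hwX⟩
        · exact ⟨fun h => hvM (h ▸ hwM),
            Or.inl ⟨Or.inr hvX, Or.inl hwM, fun h => hvMadj w hwM h⟩⟩
        · refine ⟨G.ne_of_adj hwN, Or.inr ⟨?_, hwN⟩⟩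
          rintro ⟨-, hwS⟩
          rcases hwS with h | h
          · exact hNM w h hwN
          · exact hwX h
      have hdisj : Disjoint M (N \ X') := by
        rw [Set.disjoint_left]; exact fun w hw hw2 => hNM w hw hw2.1
      have h1 : (M ∪ (N \ X')).ncard = m + (N \ X').ncard := by
        rw [Set.ncard_union_eq hdisj (Set.toFinite _) (Set.toFinite _), hm]
      have hvN : v ∉ N := fun h => G.loopless.irrefl v h
      have h2 : (N ∩ X').ncard + 1 ≤ k := by
        have hins : insert v (N ∩ X') ⊆ X' := by
          intro w hw
          rcases hw with rfl | hw
          · exact hvX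
          · exact hw.2
        have hle := Set.ncard_le_ncard hins (Set.toFinite _)
        rwa [Set.ncard_insert_of_notMem (fun h => hvN h.1) (Set.toFinite _), hcard] at hle
      have h3 : (N \ X').ncard + (N ∩ X').ncard = N.ncard := by
        have hd : Disjoint (N \ X') (N ∩ X') := by
          rw [Set.disjoint_left]; exact fun w hw hw2 => hw.2 hw2.2
        rw [← Set.ncard_union_eq hd (Set.toFinite _) (Set.toFinite _),
          Set.diff_union_inter]
      have hlev : (M ∪ (N \ X')).ncard ≤ deg (scompl G (M ∪ X')) v :=
        Set.ncard_le_ncard hsub (Set.toFinite _)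
      have hdegN : deg G v = N.ncard := rfl
      omega
  · -- v ∉ M ∪ X' : scompl neighbors = G neighbors
    have heq : (scompl G (M ∪ X')).neighborSet v = G.neighborSet v := by
      ext w
      constructor
      · rintro ⟨hne, ⟨hvS', -⟩ | ⟨-, hadj⟩⟩
        · exact absurd hvS' hvS
        · exact hadj
      · intro h
        exact ⟨G.ne_of_adj h, Or.inr ⟨fun hc => hvS hc.1, h⟩⟩
    have hvM : v ∉ M := fun h => hvS (Or.inl h)
    rw [hM] at hvM
    simp only [Set.mem_setOf_eq, not_lt] at hvM
    calc k ≤ deg G v := hvM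
      _ = deg (scompl G (M ∪ X')) v := by unfold deg; rw [heq]
end

section
/- Let G be a finite simple graph and let S be an independent set of G such that G ⊕ S is diamond-free. Then for every induced diamond of G, both of its degree-2 vertices belong to S. -/
theorem stmt7 {V : Type*} [Fintype V] (G : SimpleGraph V)
    (S : Set V) (hind : ∀ x ∈ S, ∀ y ∈ S, ¬ G.Adj x y)
    (hdf : DiamondFree (scompl G S)) :
    ∀ a b c d : V, IsDiamond G a b c d → a ∈ S ∧ b ∈ S := by
  intro a b c d hD
  obtain ⟨hab, hac, had, hbc, hbd, hcd, Aac, Aad, Abc, Abd, Acd, Nab⟩ := hD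
  by_contra hS
  have edge : ∀ x y : V, x ≠ y → G.Adj x y → (scompl G S).Adj x y := by
    intro x y hxy hadj
    refine ⟨hxy, Or.inr ⟨fun ⟨hx, hy⟩ => hind x hx y hy hadj, hadj⟩⟩
  have nonedge : ¬ (scompl G S).Adj a b := by
    rintro ⟨_, ⟨hx, hy, _⟩ | ⟨_, hadj⟩⟩
    · exact hS ⟨hx, hy⟩
    · exact Nab hadj
  exact hdf a b c d ⟨hab, hac, had, hbc, hbd, hcd,
    edge a c hac Aac, edge a d had Aad, edge b c hbc Abc,
    edge b d hbd Abd, edge c d hcd Acd, nonedge⟩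
end
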